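/- For any two nonzero integers a and b, there exist a nonnegative integer n and integers c, d such that b^n = c·a + d·b^(n+1). Consequently any two integers are algebraically dependent over ℤ (with respect to the lexicographic ordering with x₁ > x₂). -/

import Mathlib

/-- A multivariate polynomial is *submonic with respect to the lexicographic
monomial ordering* (with `x 0 > x 1 > …`) if the least monomial of its support
(for the lexicographic order on exponents) has coefficient `1`. -/
def MvPolynomial.SubmonicLex {n : ℕ} {R : Type*} [CommRing R]
    (f : MvPolynomial (Fin n) R) : Prop :=
  ∃ m ∈ f.support, MvPolynomial.coeff m f = 1 ∧
    ∀ m' ∈ f.support, toLex m ≤ toLex m'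

/-- For any two nonzero integers `a`, `b` there are `n`, `c`, `d` with
`b ^ n = c * a + d * b ^ (n + 1)`; consequently any two integers are
algebraically dependent over `ℤ` with respect to the lexicographic ordering. -/

lemma key : ∀ a b : ℤ, a ≠ 0 → b ≠ 0 → ∃ (n : ℕ) (c d : ℤ),
      b ^ n = c * a + d * b ^ (n + 1) := by
  intro a b ha hb
  haveI : NeZero a.natAbs := ⟨Int.natAbs_ne_zero.mpr ha⟩
  obtain ⟨i, j, hne, hij⟩ := Finite.exists_ne_map_eq_of_infinite
    (fun k : ℕ => (b : ZMod a.natAbs) ^ k)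
  wlog hlt : i < j generalizing i j
  · exact this j i hne.symm hij.symm (by omega)
  refine ⟨i, (b ^ i - b ^ (j - i - 1) * b ^ (i + 1)) / a, b ^ (j - i - 1), ?_⟩
  have hdvd : a ∣ b ^ i - b ^ (j - i - 1) * b ^ (i + 1) := by
    have : b ^ (j - i - 1) * b ^ (i + 1) = b ^ j := by
      rw [← pow_add]; congr 1; omega
    rw [this, ← Int.natAbs_dvd, ← ZMod.intCast_zmod_eq_zero_iff_dvd]
    push_cast
    rw [hij]; ring
  rw [Int.ediv_mul_cancel hdvd]; ring


theorem int_pairs_algebraically_dependent :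
    (∀ a b : ℤ, a ≠ 0 → b ≠ 0 → ∃ (n : ℕ) (c d : ℤ),
      b ^ n = c * a + d * b ^ (n + 1)) ∧
    ∀ a b : ℤ, ∃ f : MvPolynomial (Fin 2) ℤ,
      f.SubmonicLex ∧ MvPolynomial.eval ![a, b] f = 0 := by

  refine ⟨key, fun a b => ?_⟩
  rcases eq_or_ne a 0 with rfl | ha
  · refine ⟨MvPolynomial.X 0, ⟨Finsupp.single 0 1, ?_, ?_, ?_⟩, by simp⟩
    · simp [MvPolynomial.support_X]
    · simp [MvPolynomial.coeff_X']
    · intro m' hm'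
      simp only [MvPolynomial.support_X, Finset.mem_singleton] at hm'
      exact le_of_eq (congrArg toLex hm'.symm)
  rcases eq_or_ne b 0 with rfl | hb
  · refine ⟨MvPolynomial.X 1, ⟨Finsupp.single 1 1, ?_, ?_, ?_⟩, by simp⟩
    · simp [MvPolynomial.support_X]
    · simp [MvPolynomial.coeff_X']
    · intro m' hm'
      simp only [MvPolynomial.support_X, Finset.mem_singleton] at hm'
      exact le_of_eq (congrArg toLex hm'.symm)
  obtain ⟨n, c, d, hcd⟩ := key a b ha hb
  set A : Fin 2 →₀ ℕ := Finsupp.single 1 n with hA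
  set B : Fin 2 →₀ ℕ := Finsupp.single 0 1 with hB
  set Cc : Fin 2 →₀ ℕ := Finsupp.single 1 (n + 1) with hCc
  have hAB : A ≠ B := by
    intro h
    have := DFunLike.congr_fun h (0 : Fin 2)
    simp [hA, hB, Finsupp.single_apply] at this
  have hAC : A ≠ Cc := by
    intro h
    have := DFunLike.congr_fun h (1 : Fin 2)
    simp [hA, hCc] at this
  have hBC : B ≠ Cc := by
    intro h
    have := DFunLike.congr_fun h (0 : Fin 2)
    simp [hB, hCc, Finsupp.single_apply] at this
  set f : MvPolynomial (Fin 2) ℤ :=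
    MvPolynomial.X 1 ^ n - MvPolynomial.C c * MvPolynomial.X 0
      - MvPolynomial.C d * MvPolynomial.X 1 ^ (n + 1) with hf
  have hcoeff : ∀ m : Fin 2 →₀ ℕ, MvPolynomial.coeff m f =
      (if A = m then 1 else 0) - c * (if B = m then 1 else 0)
        - d * (if Cc = m then 1 else 0) := by
    intro m
    simp only [hf, MvPolynomial.coeff_sub, MvPolynomial.coeff_C_mul,
      MvPolynomial.coeff_X_pow, MvPolynomial.coeff_X', hA, hB, hCc,
      mul_ite, mul_one, mul_zero]
  have hcA : MvPolynomial.coeff A f = 1 := by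
    rw [hcoeff]; simp [Ne.symm hAB, Ne.symm hAC]
  refine ⟨f, ⟨A, ?_, hcA, ?_⟩, ?_⟩
  · rw [MvPolynomial.mem_support_iff, hcA]; exact one_ne_zero
  · intro m' hm'
    rw [MvPolynomial.mem_support_iff] at hm'
    rw [hcoeff] at hm'
    have hm3 : A = m' ∨ B = m' ∨ Cc = m' := by
      by_contra h
      push_neg at h
      simp [h.1, h.2.1, h.2.2] at hm'
    rcases hm3 with rfl | rfl | rfl
    · exact le_rfl
    · refine le_of_lt (Finsupp.Lex.lt_iff.mpr ⟨0, fun j hj => absurd hj (by omega), ?_⟩)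
      simp [hA, hB, Finsupp.single_apply]
    · refine le_of_lt (Finsupp.Lex.lt_iff.mpr ⟨1, fun j hj => ?_, ?_⟩)
      · fin_cases j
        · simp [hA, hCc, Finsupp.single_apply]
        · exact absurd hj (by decide)
      · simp [hA, hCc]
  · simp only [hf, map_sub, map_mul, map_pow, MvPolynomial.eval_C, MvPolynomial.eval_X]
    simp only [Matrix.cons_val_zero, Matrix.cons_val_one, Matrix.head_cons]
    rw [hcd]; ring
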